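/- If the monitor for the LTL version φ_LTL of an ATL* formula φ = ⟪Γ⟫ψ (ψ a quantifier-free path formula) reports ⊤ on a history h of an iCGS M starting in the initial state s_I, then M, s_I ⊨ ⟪Ag⟫ψ, i.e., the grand coalition of all agents has a joint strategy enforcing ψ from s_I. -/

import Mathlib

/-- Syntax of LTL formulas over atomic propositions `AP`. -/
inductive LTL (AP : Type) where
  | atom : AP → LTL AP
  | neg  : LTL AP → LTL AP
  | conj : LTL AP → LTL AP → LTL AP
  | next : LTL AP → LTL AP
  | untl : LTL AP → LTL AP → LTL AP

/-- Standard LTL semantics over infinite traces `ρ : ℕ → Set AP` (0-indexed). -/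
def LTL.Sat {AP : Type} : (ℕ → Set AP) → LTL AP → Prop
  | ρ, .atom q => q ∈ ρ 0
  | ρ, .neg ψ => ¬ LTL.Sat ρ ψ
  | ρ, .conj ψ ψ' => LTL.Sat ρ ψ ∧ LTL.Sat ρ ψ'
  | ρ, .next ψ => LTL.Sat (fun n => ρ (n + 1)) ψ
  | ρ, .untl ψ ψ' => ∃ k, LTL.Sat (fun n => ρ (n + k)) ψ' ∧
      ∀ j < k, LTL.Sat (fun n => ρ (n + j)) ψ

/-- Concatenation of a finite trace with an infinite trace. -/
def ext {AP : Type} (ρ : List (Set AP)) (ρ' : ℕ → Set AP) : ℕ → Set AP :=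
  fun n => if h : n < ρ.length then ρ.get ⟨n, h⟩ else ρ' (n - ρ.length)

/-- The three monitor verdicts. -/
inductive Verdict where
  | top | bot | unknown
deriving DecidableEq

-- The LTL monitor: ⊤ if all infinite extensions satisfy ψ, ⊥ if all violate ψ, ? otherwise.
open Classical in
noncomputable def Mon {AP : Type} (ψ : LTL AP) (ρ : List (Set AP)) : Verdict :=
  if ∀ ρ' : ℕ → Set AP, LTL.Sat (ext ρ ρ') ψ then Verdict.top
  else if ∀ ρ' : ℕ → Set AP, ¬ LTL.Sat (ext ρ ρ') ψ then Verdict.bot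
  else Verdict.unknown
/-- A concurrent game structure (with imperfect information), without bundled
well-formedness conditions. -/
structure CGS (Agt S AP Act : Type) where
  init : S
  indist : Agt → S → S → Prop
  protocol : Agt → S → Set Act
  trans : S → (Agt → Act) → S
  label : S → Set AP

/-- Well-formedness: protocols are nonempty and invariant under indistinguishability.
(The transition function is total by typing.) -/
def CGS.WellFormed {Agt S AP Act : Type} (M : CGS Agt S AP Act) : Prop :=
  (∀ i s, (M.protocol i s).Nonempty) ∧
  (∀ i s s', M.indist i s s' → M.protocol i s = M.protocol i s')

/-- Uniform strategy for agent `i`: returns enabled actions at the last state of a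
history, and agrees on (synchronously, pointwise) indistinguishable histories. -/
def CGS.UniformStrategy {Agt S AP Act : Type} (M : CGS Agt S AP Act) (i : Agt)
    (σ : List S → Act) : Prop :=
  (∀ (h : List S) (hne : h ≠ []), σ h ∈ M.protocol i (h.getLast hne)) ∧
  (∀ h h' : List S, List.Forall₂ (M.indist i) h h' → σ h = σ h')

/-- `out(s, σ_Γ)`: the σ_Γ-compatible infinite paths from `s`. -/
def CGS.outSet {Agt S AP Act : Type} (M : CGS Agt S AP Act) (Γ : Set Agt)
    (σ : Agt → List S → Act) (s : S) : Set (ℕ → S) :=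
  { p | p 0 = s ∧ ∀ j : ℕ, ∃ a : Agt → Act,
      (∀ i, a i ∈ M.protocol i (p j)) ∧
      (∀ i ∈ Γ, a i = σ i ((List.range (j + 1)).map p)) ∧
      p (j + 1) = M.trans (p j) a }

/-- `M, s ⊨ ⟪Γ⟫ψ` for an LTL path formula `ψ` read on labelling traces. -/
def CGS.SatATL {Agt S AP Act : Type} (M : CGS Agt S AP Act) (s : S) (Γ : Set Agt)
    (ψ : LTL AP) : Prop :=
  ∃ σ : Agt → List S → Act, (∀ i ∈ Γ, M.UniformStrategy i (σ i)) ∧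
    ∀ p ∈ M.outSet Γ σ s, LTL.Sat (fun n => M.label (p n)) ψ

/-- Infinite path of `M` from `s` (each step via some enabled joint action). -/
def CGS.IsPath {Agt S AP Act : Type} (M : CGS Agt S AP Act) (s : S) (p : ℕ → S) : Prop :=
  p 0 = s ∧ ∀ j : ℕ, ∃ a : Agt → Act,
    (∀ i, a i ∈ M.protocol i (p j)) ∧ p (j + 1) = M.trans (p j) a

/-- History: finite nonempty path of `M` starting at `s`. -/
def CGS.IsHistory {Agt S AP Act : Type} (M : CGS Agt S AP Act) (s : S) (h : List S) : Prop :=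
  h.head? = some s ∧ ∀ j : ℕ, (hj : j + 1 < h.length) → ∃ a : Agt → Act,
    (∀ i, a i ∈ M.protocol i (h.get ⟨j, Nat.lt_of_succ_lt hj⟩)) ∧
    h.get ⟨j + 1, hj⟩ = M.trans (h.get ⟨j, Nat.lt_of_succ_lt hj⟩) a


private lemma forall2_getLast? {α : Type*} {r : α → α → Prop} {l l' : List α}
    (h : List.Forall₂ r l l') (hne : l ≠ []) :
    ∃ a b, l.getLast? = some a ∧ l'.getLast? = some b ∧ r a b := by
  induction h with
  | nil => exact absurd rfl hne
  | @cons x y l l' hab htl ih =>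
    cases htl with
    | nil => exact ⟨x, y, rfl, rfl, hab⟩
    | @cons c d t t' hcd htl2 =>
      obtain ⟨a, b, h1, h2, h3⟩ := ih (by simp)
      exact ⟨a, b, by rw [List.getLast?_cons_cons, h1],
        by rw [List.getLast?_cons_cons, h2], h3⟩

/-- if the monitor for the LTL version ψ of φ = ⟪Γ⟫ψ reports ⊤ on a
history h of M from the initial state, then M, s_I ⊨ ⟪Ag⟫ψ (grand coalition). -/
theorem stmt_3 {Agt S AP Act : Type} (M : CGS Agt S AP Act) (hwf : M.WellFormed)
    (heq : ∀ i, Equivalence (M.indist i)) (ψ : LTL AP) (h : List S)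
    (hh : M.IsHistory M.init h)
    (hmon : Mon ψ (h.map M.label) = Verdict.top) :
    M.SatATL M.init (Set.univ : Set Agt) ψ := by
  classical
  -- extract the monitor verdict
  have hall : ∀ ρ' : ℕ → Set AP, LTL.Sat (ext (h.map M.label) ρ') ψ := by
    by_contra hc
    rw [Mon, if_neg hc] at hmon
    split at hmon <;> exact Verdict.noConfusion hmon
  have hne : h ≠ [] := by
    intro hE; rw [hE] at hh; exact absurd hh.1 (by simp)
  have hlenpos : 0 < h.length := List.length_pos_iff.mpr hne
  have hget0 : h.get ⟨0, hlenpos⟩ = M.init := by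
    cases h with
    | nil => exact absurd rfl hne
    | cons a t =>
      have : some a = some M.init := hh.1
      simpa using this
  -- candidate joint actions replaying h
  set cand : ℕ → Agt → Act := fun j =>
    if hj : j + 1 < h.length then Classical.choose (hh.2 j hj)
    else fun i => (hwf.1 i M.init).some with hcanddef
  have hcand_spec : ∀ j (hj : j + 1 < h.length),
      (∀ i, cand j i ∈ M.protocol i (h.get ⟨j, Nat.lt_of_succ_lt hj⟩)) ∧
      h.get ⟨j + 1, hj⟩ = M.trans (h.get ⟨j, Nat.lt_of_succ_lt hj⟩) (cand j) := by
    intro j hj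
    simp only [hcanddef, dif_pos hj]
    exact Classical.choose_spec (hh.2 j hj)
  -- a default pick from a set of actions
  set pick : Agt → Set Act → Act := fun i A =>
    if hA : A.Nonempty then hA.some else (hwf.1 i M.init).some with hpickdef
  have hpick_mem : ∀ i A, A.Nonempty → pick i A ∈ A := by
    intro i A hA
    simp only [hpickdef, dif_pos hA]
    exact hA.some_mem
  -- the strategy
  set σ : Agt → List S → Act := fun i l =>
    if cand (l.length - 1) i ∈ M.protocol i (l.getLast?.getD M.init)
    then cand (l.length - 1) i
    else pick i (M.protocol i (l.getLast?.getD M.init)) with hσdef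
  refine ⟨σ, ?_, ?_⟩
  · -- uniform strategies
    intro i _
    constructor
    · intro l hnel
      have hlast : l.getLast?.getD M.init = l.getLast hnel := by
        rw [List.getLast?_eq_getLast hnel]; rfl
      simp only [hσdef]
      rw [hlast]
      split
      · assumption
      · exact hpick_mem i _ (hwf.1 i _)
    · intro l l' hrel
      have hlen : l.length = l'.length := hrel.length_eq
      have hprot : M.protocol i (l.getLast?.getD M.init)
          = M.protocol i (l'.getLast?.getD M.init) := by
        rcases eq_or_ne l [] with hE | hE
        · have : l' = [] := by
            cases hrel with
            | nil => rfl
            | cons _ _ => exact absurd hE (by simp)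
          rw [hE, this]
        · obtain ⟨a, b, h1, h2, h3⟩ := forall2_getLast? hrel hE
          rw [h1, h2]
          exact hwf.2 i a b h3
      simp only [hσdef, hlen, hprot]
  · -- all outcomes satisfy ψ
    intro p hp
    obtain ⟨hp0, hstep⟩ := hp
    -- the outcome replays h
    have hfollow : ∀ j (hj : j < h.length), p j = h.get ⟨j, hj⟩ := by
      intro j
      induction j with
      | zero => intro hj; rw [hp0, hget0]
      | succ j ih =>
        intro hj
        have hjlt : j < h.length := Nat.lt_of_succ_lt hj
        have hpj : p j = h.get ⟨j, hjlt⟩ := ih hjlt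
        obtain ⟨a, hamem, haσ, htr⟩ := hstep j
        set l : List S := (List.range (j + 1)).map p with hldef
        have hllen : l.length = j + 1 := by simp [hldef]
        have hllast : l.getLast? = some (p j) := by
          rw [hldef, List.range_succ, List.map_append]
          exact List.getLast?_concat
        have hσval : ∀ i, σ i l = cand j i := by
          intro i
          have hmem : cand j i ∈ M.protocol i (l.getLast?.getD M.init) := by
            rw [hllast]
            simpa [hpj] using (hcand_spec j hj).1 i
          simp only [hσdef, hllen, Nat.add_sub_cancel]
          rw [if_pos (by simpa [hllen] using hmem)]
        have haeq : a = cand j := by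
          funext i
          rw [haσ i (Set.mem_univ i), hσval i]
        rw [htr, haeq, hpj]
        exact ((hcand_spec j hj).2).symm
    -- the labelling trace of p extends that of h
    have htrace : (fun n => M.label (p n))
        = ext (h.map M.label) (fun n => M.label (p (n + h.length))) := by
      funext n
      by_cases hn : n < h.length
      · have : n < (h.map M.label).length := by simpa using hn
        rw [ext, dif_pos this]
        have := hfollow n hn
        simp [this]
      · have : ¬ n < (h.map M.label).length := by simpa using hn
        rw [ext, dif_neg this]
        have hml : (h.map M.label).length = h.length := List.length_map _
        have hnn : n - (h.map M.label).length + h.length = n := by omega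
        rw [hnn]
    rw [htrace]
    exact hall _
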